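/- Fix a rate G > 0, number of cookies goal M > 0, and an item with rate increase x and cost y. Consider strategies that, starting with 0 cookies at rate G, buy the item k times (purchase n costs y at rate G+(n−1)x, taking y/(G+(n−1)x) time) then wait M/(G+kx). If y/G + M/(G+x) > M/G, then for every k ≥ 1 the total time of the k-purchase strategy strictly exceeds M/G. -/

import Mathlib

theorem stmt_16 (G M x y : ℝ)
    (hG : 0 < G) (hM : 0 < M) (hx : 0 < x) (hy : 0 < y)
    (h : y / G + M / (G + x) > M / G) :
    ∀ k : ℕ, 1 ≤ k →
      (∑ n ∈ Finset.range k, y / (G + n * x)) + M / (G + k * x) > M / G := by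
  have hGx : 0 < G + x := by linarith
  have key : M * x < y * (G + x) := by
    rw [gt_iff_lt, div_add_div _ _ hG.ne' hGx.ne',
      div_lt_div_iff₀ hG (by positivity : (0:ℝ) < G * (G + x))] at h
    nlinarith [hG]
  intro k hk
  induction k, hk using Nat.le_induction with
  | base =>
    simpa using h
  | succ n hn ih =>
    have hn1 : (1:ℝ) ≤ (n:ℝ) := by exact_mod_cast hn
    have hd1 : 0 < G + (n:ℝ) * x := by nlinarith
    have hd2 : 0 < G + ((n:ℝ) + 1) * x := by nlinarith
    rw [Finset.sum_range_succ]
    push_cast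
    have step : M / (G + (n:ℝ) * x) ≤ y / (G + (n:ℝ) * x) + M / (G + ((n:ℝ) + 1) * x) := by
      rw [div_add_div _ _ hd1.ne' hd2.ne',
        div_le_div_iff₀ hd1 (mul_pos hd1 hd2)]
      have h1 : M * x < y * (G + ((n:ℝ) + 1) * x) := by
        nlinarith [mul_nonneg (mul_nonneg hy.le (by positivity : (0:ℝ) ≤ (n:ℝ))) hx.le]
      nlinarith [mul_lt_mul_of_pos_left h1 hd1]
    push_cast at ih
    linarith
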